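/- There exists a constant C > 0 such that for all real x ≥ 2, Σ_{t ≤ x} 1/φ(t) ≤ C * log x, where the sum is over positive integers t ≤ x and φ denotes Euler's totient function. -/

import Mathlib

open Finset

/-- Key inequality: `n / φ(n) ≤ ∑_{d ∣ n} 1/φ(d)`, via `∑_{d∣n} φ(d) = n` and
super-multiplicativity of `φ`. -/
lemma key_totient (n : ℕ) (hn : n ≠ 0) :
    (n : ℝ) / (Nat.totient n) ≤ ∑ d ∈ n.divisors, (1 : ℝ) / (Nat.totient d) := by
  have hφ : (0 : ℝ) < Nat.totient n := by
    exact_mod_cast Nat.totient_pos.mpr (Nat.pos_of_ne_zero hn)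
  rw [div_le_iff₀ hφ]
  have h1 : (n : ℝ) = ∑ d ∈ n.divisors, (Nat.totient (n / d) : ℝ) := by
    rw [Nat.sum_div_divisors n (fun d => (Nat.totient d : ℝ))]
    exact_mod_cast (Nat.sum_totient n).symm
  rw [h1, Finset.sum_mul]
  refine Finset.sum_le_sum fun d hd => ?_
  obtain ⟨hdvd, -⟩ := Nat.mem_divisors.mp hd
  have hd0 : d ≠ 0 := by
    rintro rfl; exact hn (Nat.eq_zero_of_zero_dvd hdvd)
  have hφd : (0 : ℝ) < Nat.totient d := by
    exact_mod_cast Nat.totient_pos.mpr (Nat.pos_of_ne_zero hd0)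
  rw [one_div, inv_mul_eq_div, le_div_iff₀ hφd]
  have := Nat.totient_super_multiplicative (n / d) d
  rw [Nat.div_mul_cancel hdvd] at this
  exact_mod_cast this

/-- Summing a divisor-sum over `n ≤ N` is at most the corresponding full product sum. -/
lemma swap_bound (N : ℕ) (f g : ℕ → ℝ) (hf : ∀ n, 0 ≤ f n) (hg : ∀ n, 0 ≤ g n) :
    ∑ n ∈ Finset.Icc 1 N, ∑ d ∈ n.divisors, f d * g (n / d) ≤
      (∑ d ∈ Finset.Icc 1 N, f d) * (∑ m ∈ Finset.Icc 1 N, g m) := by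
  have h1 : ∀ n : ℕ, ∑ d ∈ n.divisors, f d * g (n / d)
      = ∑ p ∈ n.divisorsAntidiagonal, f p.1 * g p.2 :=
    fun n => (Nat.sum_divisorsAntidiagonal (fun i j => f i * g j)).symm
  simp_rw [h1]
  have hdisj : (Finset.Icc 1 N : Set ℕ).PairwiseDisjoint Nat.divisorsAntidiagonal := by
    intro a _ b _ hab
    rw [Function.onFun]
    rw [Finset.disjoint_left]
    intro p hp hq
    exact hab (((Nat.mem_divisorsAntidiagonal.mp hp).1.symm).trans
      (Nat.mem_divisorsAntidiagonal.mp hq).1)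
  rw [← Finset.sum_biUnion hdisj]
  have hsub : (Finset.Icc 1 N).biUnion Nat.divisorsAntidiagonal ⊆
      Finset.Icc 1 N ×ˢ Finset.Icc 1 N := by
    intro p hp
    obtain ⟨n, hn, hpn⟩ := Finset.mem_biUnion.mp hp
    obtain ⟨hmul, hn0⟩ := Nat.mem_divisorsAntidiagonal.mp hpn
    have h1' : p.1 ≠ 0 := by rintro h; exact hn0 (by rw [← hmul, h, zero_mul])
    have h2' : p.2 ≠ 0 := by rintro h; exact hn0 (by rw [← hmul, h, mul_zero])
    have hnN : n ≤ N := (Finset.mem_Icc.mp hn).2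
    refine Finset.mem_product.mpr ⟨Finset.mem_Icc.mpr ⟨Nat.one_le_iff_ne_zero.mpr h1', ?_⟩,
      Finset.mem_Icc.mpr ⟨Nat.one_le_iff_ne_zero.mpr h2', ?_⟩⟩
    · calc p.1 ≤ p.1 * p.2 := Nat.le_mul_of_pos_right _ (Nat.pos_of_ne_zero h2')
        _ ≤ N := hmul ▸ hnN
    · calc p.2 ≤ p.1 * p.2 := Nat.le_mul_of_pos_left _ (Nat.pos_of_ne_zero h1')
        _ ≤ N := hmul ▸ hnN
  calc ∑ p ∈ (Finset.Icc 1 N).biUnion Nat.divisorsAntidiagonal, f p.1 * g p.2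
      ≤ ∑ p ∈ Finset.Icc 1 N ×ˢ Finset.Icc 1 N, f p.1 * g p.2 :=
        Finset.sum_le_sum_of_subset_of_nonneg hsub fun p _ _ => mul_nonneg (hf _) (hg _)
    _ = (∑ d ∈ Finset.Icc 1 N, f d) * (∑ m ∈ Finset.Icc 1 N, g m) := by
        rw [Finset.sum_product, Finset.sum_mul_sum]

/-- Harmonic sum bound. -/
lemma harm_bound (N : ℕ) (hN : 1 ≤ N) :
    ∑ m ∈ Finset.Icc 1 N, (1 : ℝ) / m ≤ 1 + Real.log N := by
  induction N, hN using Nat.le_induction with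
  | base => simp
  | succ n hn ih =>
    rw [Finset.sum_Icc_succ_top (by omega : 1 ≤ n + 1)]
    have hn' : (0 : ℝ) < n := by exact_mod_cast hn
    have hlog : Real.log n - Real.log (n + 1) ≤ -(1 / ((n : ℝ) + 1)) := by
      have h := Real.log_le_sub_one_of_pos (show (0:ℝ) < (n : ℝ) / (n + 1) by positivity)
      rw [Real.log_div (ne_of_gt hn') (by positivity)] at h
      have : (n : ℝ) / (n + 1) - 1 = -(1 / ((n : ℝ) + 1)) := by field_simp; ring
      linarith [this ▸ h]
    push_cast
    push_cast at ih
    linarith [ih]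

/-- Sum of inverse squares bound. -/
lemma sq_bound (N : ℕ) (hN : 1 ≤ N) :
    ∑ m ∈ Finset.Icc 1 N, (1 : ℝ) / (m * m) ≤ 2 - 1 / N := by
  induction N, hN using Nat.le_induction with
  | base => norm_num
  | succ n hn ih =>
    rw [Finset.sum_Icc_succ_top (by omega : 1 ≤ n + 1)]
    have hn' : (0 : ℝ) < n := by exact_mod_cast hn
    have h1 : (1 : ℝ) / (((n : ℝ) + 1) * ((n : ℝ) + 1)) ≤ 1 / n - 1 / ((n : ℝ) + 1) := by
      rw [div_sub_div _ _ (ne_of_gt hn') (by positivity), div_le_div_iff₀ (by positivity)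
        (by positivity)]
      ring_nf
      nlinarith
    push_cast
    push_cast at ih
    linarith [ih]

/-- The sum of reciprocals of Euler's totient function up to `x` is `O(log x)`. -/
theorem sum_inv_totient_le :
    ∃ C : ℝ, 0 < C ∧ ∀ x : ℝ, 2 ≤ x →
      ∑ t ∈ Finset.Icc 1 ⌊x⌋₊, (1 : ℝ) / (Nat.totient t) ≤ C * Real.log x := by
  refine ⟨12, by norm_num, ?_⟩
  intro x hx
  set N := ⌊x⌋₊ with hNdef
  have hN2 : 2 ≤ N := Nat.le_floor (by exact_mod_cast hx)
  have hφpos : ∀ d : ℕ, d ≠ 0 → (0 : ℝ) < Nat.totient d := fun d hd => by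
    exact_mod_cast Nat.totient_pos.mpr (Nat.pos_of_ne_zero hd)
  -- Step 1: termwise divisor expansion of 1/φ(n)
  have key2 : ∀ n : ℕ, n ≠ 0 → (1 : ℝ) / (Nat.totient n) ≤
      ∑ d ∈ n.divisors, (1 / ((d : ℝ) * Nat.totient d)) * (1 / ((n / d : ℕ) : ℝ)) := by
    intro n hn
    have hnpos : (0 : ℝ) < n := by exact_mod_cast Nat.pos_of_ne_zero hn
    have h := key_totient n hn
    calc (1 : ℝ) / (Nat.totient n) = (1 / n) * ((n : ℝ) / Nat.totient n) := by
          field_simp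
      _ ≤ (1 / n) * ∑ d ∈ n.divisors, (1 : ℝ) / (Nat.totient d) := by
          exact mul_le_mul_of_nonneg_left h (by positivity)
      _ = ∑ d ∈ n.divisors, (1 / (n : ℝ)) * (1 / (Nat.totient d)) := Finset.mul_sum _ _ _
      _ = ∑ d ∈ n.divisors, (1 / ((d : ℝ) * Nat.totient d)) * (1 / ((n / d : ℕ) : ℝ)) := by
          refine Finset.sum_congr rfl fun d hd => ?_
          obtain ⟨hdvd, -⟩ := Nat.mem_divisors.mp hd
          have hd0 : d ≠ 0 := by rintro rfl; exact hn (Nat.eq_zero_of_zero_dvd hdvd)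
          have hm0 : (n / d : ℕ) ≠ 0 := Nat.div_ne_zero_iff_of_dvd hdvd |>.mpr ⟨hn, hd0⟩
          have hcast : (d : ℝ) * ((n / d : ℕ) : ℝ) = (n : ℝ) := by
            exact_mod_cast congrArg (Nat.cast (R := ℝ)) (Nat.mul_div_cancel' hdvd)
          have hφd := hφpos d hd0
          rw [← hcast]
          have hd' : (0:ℝ) < d := by exact_mod_cast Nat.pos_of_ne_zero hd0
          have hm' : (0:ℝ) < ((n / d : ℕ) : ℝ) := by exact_mod_cast Nat.pos_of_ne_zero hm0
          field_simp
          try ring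
  -- Step 2: the inner constant sum A
  have key3 : ∀ d : ℕ, d ≠ 0 → (1 : ℝ) / ((d : ℝ) * Nat.totient d) ≤
      ∑ e ∈ d.divisors, (1 / ((e : ℝ) * e * Nat.totient e)) *
        (1 / (((d / e : ℕ) : ℝ) * ((d / e : ℕ) : ℝ))) := by
    intro d hd
    have hdpos : (0 : ℝ) < d := by exact_mod_cast Nat.pos_of_ne_zero hd
    have h := key_totient d hd
    calc (1 : ℝ) / ((d : ℝ) * Nat.totient d)
        = (1 / ((d : ℝ) * d)) * ((d : ℝ) / Nat.totient d) := by
          field_simp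
          try ring
      _ ≤ (1 / ((d : ℝ) * d)) * ∑ e ∈ d.divisors, (1 : ℝ) / (Nat.totient e) := by
          exact mul_le_mul_of_nonneg_left h (by positivity)
      _ = ∑ e ∈ d.divisors, (1 / ((d : ℝ) * d)) * (1 / (Nat.totient e)) := Finset.mul_sum _ _ _
      _ = ∑ e ∈ d.divisors, (1 / ((e : ℝ) * e * Nat.totient e)) *
            (1 / (((d / e : ℕ) : ℝ) * ((d / e : ℕ) : ℝ))) := by
          refine Finset.sum_congr rfl fun e he => ?_
          obtain ⟨hdvd, -⟩ := Nat.mem_divisors.mp he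
          have he0 : e ≠ 0 := by rintro rfl; exact hd (Nat.eq_zero_of_zero_dvd hdvd)
          have hm0 : (d / e : ℕ) ≠ 0 := Nat.div_ne_zero_iff_of_dvd hdvd |>.mpr ⟨hd, he0⟩
          have hcast : (e : ℝ) * ((d / e : ℕ) : ℝ) = (d : ℝ) := by
            exact_mod_cast congrArg (Nat.cast (R := ℝ)) (Nat.mul_div_cancel' hdvd)
          have hφe := hφpos e he0
          rw [← hcast]
          have he' : (0:ℝ) < e := by exact_mod_cast Nat.pos_of_ne_zero he0
          have hm' : (0:ℝ) < ((d / e : ℕ) : ℝ) := by exact_mod_cast Nat.pos_of_ne_zero hm0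
          field_simp
          try ring
  -- bound A ≤ 4
  have hA : ∑ d ∈ Finset.Icc 1 N, (1 : ℝ) / ((d : ℝ) * Nat.totient d) ≤ 4 := by
    have h1 : ∑ d ∈ Finset.Icc 1 N, (1 : ℝ) / ((d : ℝ) * Nat.totient d) ≤
        ∑ d ∈ Finset.Icc 1 N, ∑ e ∈ d.divisors,
          (fun e : ℕ => 1 / ((e : ℝ) * e * Nat.totient e)) e *
          (fun m : ℕ => 1 / ((m : ℝ) * m)) (d / e) :=
      Finset.sum_le_sum fun d hd => key3 d (by
        have := (Finset.mem_Icc.mp hd).1; omega)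
    have h2 := swap_bound N (fun e => 1 / ((e : ℝ) * e * Nat.totient e))
      (fun m => 1 / ((m : ℝ) * m)) (fun n => by positivity) (fun n => by positivity)
    have h3 : ∑ e ∈ Finset.Icc 1 N, (1 : ℝ) / ((e : ℝ) * e * Nat.totient e) ≤
        ∑ e ∈ Finset.Icc 1 N, (1 : ℝ) / ((e : ℝ) * e) := by
      refine Finset.sum_le_sum fun e he => ?_
      have he1 := (Finset.mem_Icc.mp he).1
      have he' : (0 : ℝ) < e := by exact_mod_cast by omega
      have hφe : (1 : ℝ) ≤ Nat.totient e := by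
        exact_mod_cast Nat.totient_pos.mpr (by omega)
      apply one_div_le_one_div_of_le (by positivity)
      nlinarith
    have hsq := sq_bound N (by omega)
    have hNpos : (0 : ℝ) < (N : ℝ) := by
      have : 0 < N := by omega
      exact_mod_cast this
    have hsq' : ∑ m ∈ Finset.Icc 1 N, (1 : ℝ) / ((m : ℝ) * m) ≤ 2 := by
      have h0 : (0 : ℝ) < 1 / (N : ℝ) := by positivity
      linarith
    have hnonneg : (0:ℝ) ≤ ∑ e ∈ Finset.Icc 1 N, (1 : ℝ) / ((e : ℝ) * e * Nat.totient e) := by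
      apply Finset.sum_nonneg; intro e _; positivity
    calc ∑ d ∈ Finset.Icc 1 N, (1 : ℝ) / ((d : ℝ) * Nat.totient d)
        ≤ (∑ e ∈ Finset.Icc 1 N, (1 : ℝ) / ((e : ℝ) * e * Nat.totient e)) *
          (∑ m ∈ Finset.Icc 1 N, (1 : ℝ) / ((m : ℝ) * m)) := le_trans h1 h2
      _ ≤ 2 * 2 := by
          apply mul_le_mul (le_trans h3 hsq') hsq' (Finset.sum_nonneg fun m _ => by positivity)
            (by norm_num)
      _ = 4 := by norm_num
  -- Step 3: assemble
  have h1 : ∑ t ∈ Finset.Icc 1 N, (1 : ℝ) / (Nat.totient t) ≤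
      ∑ n ∈ Finset.Icc 1 N, ∑ d ∈ n.divisors,
        (fun d : ℕ => 1 / ((d : ℝ) * Nat.totient d)) d * (fun m : ℕ => 1 / (m : ℝ)) (n / d) :=
    Finset.sum_le_sum fun n hn => key2 n (by have := (Finset.mem_Icc.mp hn).1; omega)
  have h2 := swap_bound N (fun d => 1 / ((d : ℝ) * Nat.totient d)) (fun m => 1 / (m : ℝ))
    (fun n => by positivity) (fun n => by positivity)
  have hH : ∑ m ∈ Finset.Icc 1 N, (1 : ℝ) / m ≤ 1 + Real.log N := harm_bound N (by omega)
  have hHnonneg : (0:ℝ) ≤ ∑ m ∈ Finset.Icc 1 N, (1 : ℝ) / m :=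
    Finset.sum_nonneg fun m _ => by positivity
  have hAnonneg : (0:ℝ) ≤ ∑ d ∈ Finset.Icc 1 N, (1 : ℝ) / ((d : ℝ) * Nat.totient d) :=
    Finset.sum_nonneg fun d _ => by positivity
  have hlogN : Real.log N ≤ Real.log x := by
    have h0 : (0:ℝ) < (N:ℝ) := by
      have : 0 < N := by omega
      exact_mod_cast this
    apply Real.log_le_log h0
    exact Nat.floor_le (by linarith)
  have hlog2 : (1 : ℝ) / 2 < Real.log x := by
    have h9 := Real.log_two_gt_d9
    have := Real.log_le_log (by norm_num : (0:ℝ) < 2) hx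
    linarith
  calc ∑ t ∈ Finset.Icc 1 N, (1 : ℝ) / (Nat.totient t)
      ≤ (∑ d ∈ Finset.Icc 1 N, (1 : ℝ) / ((d : ℝ) * Nat.totient d)) *
        (∑ m ∈ Finset.Icc 1 N, (1 : ℝ) / m) := le_trans h1 h2
    _ ≤ 4 * (1 + Real.log N) := by
        exact mul_le_mul hA hH hHnonneg (by norm_num)
    _ ≤ 4 * (1 + Real.log x) := by
        have : (0:ℝ) ≤ Real.log N := by
          apply Real.log_nonneg
          have h1' : 1 ≤ N := by omega
          exact_mod_cast h1'
        linarith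
    _ ≤ 12 * Real.log x := by linarith
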